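/- Let 0 < ε < 1 and d ≥ 2, let M be the noisy projective measurement in dimension d, and let ψ = (1/√d)·(1,…,1) ∈ ℂ^d be the unbiased state. Then every valid decomposition K of M satisfies ∑_j ⟪ψ, (K j j)·ψ⟫ ≤ (1/d)·(tr √(M 0))² = (1/d²)·(√(d−(d−1)ε) + (d−1)√ε)². -/

import Mathlib

set_option maxHeartbeats 1000000

open Matrix ComplexOrder

noncomputable section

/-- `K` is a valid decomposition of the POVM `M`. -/
def IsDecomp {m d : ℕ} (M : Fin m → Matrix (Fin d) (Fin d) ℂ)
    (K : Fin m → Fin m → Matrix (Fin d) (Fin d) ℂ) : Prop :=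
  (∀ x j, (K x j).PosSemidef) ∧
  (∀ j, (d : ℂ) • ∑ x, K x j = (∑ x, (K x j).trace) • (1 : Matrix (Fin d) (Fin d) ℂ)) ∧
  (∀ x, ∑ j, K x j = M x)

/-- Eve's objective for the decomposition `K` and the state `φ`:
`∑_j ⟪φ, (K j j) φ⟫`. -/
def objective {m d : ℕ} (K : Fin m → Fin m → Matrix (Fin d) (Fin d) ℂ)
    (φ : Fin d → ℂ) : ℝ :=
  ∑ j, (star φ ⬝ᵥ (K j j).mulVec φ).re

/-- The noisy projective measurement in dimension `d` with noise parameter `ε`. -/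
def noisyM (d : ℕ) (ε : ℝ) : Fin d → Matrix (Fin d) (Fin d) ℂ :=
  fun x => ((1 - ε : ℝ) : ℂ) • Matrix.single x x 1 + ((ε / d : ℝ) : ℂ) • 1

namespace NPB

/-! ### Scalar certificate data -/

variable (a b n : ℝ)

def S : ℝ := a + (n-1)*b
def wn : ℝ := b*n^2 + a*(a-b)^2
def w : ℝ := wn a b n / (b*n^2)
def A3 : ℝ := (a-b)*b*(S a b n)/((a+b)*n^2)
def B3 : ℝ := -((a-b)*(S a b n)/((a+b)*b*n^2))
def nu : ℝ := (a-b)^2*(S a b n)^2/((a+b)^2*n*a*(wn a b n))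
def y2 : ℝ := (a-b)^2*(S a b n)^2*(a+b^3)/((a+b)^2*n*(wn a b n))
def z2 : ℝ := y2 a b n / (a*b)
def rho : ℝ := (a-b)^2/(a*b*n^3)
def z1 : ℝ := (y2 a b n + 2*(A3 a b n) + w a b n)/n

section Scalar

variable (ha : 0 < a) (hb : 0 < b) (hba : b < a) (hn : 2 ≤ n)

include ha hb hba hn

omit ha hb hba in
lemma hn0 : (0:ℝ) < n := lt_of_lt_of_le (by norm_num) hn

lemma hwn0 : 0 < wn a b n := by
  have := hn0 n hn; unfold wn; positivity
lemma hw0 : 0 < w a b n := by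
  have h1 := hn0 n hn
  have h2 := hwn0 a b n ha hb hba hn
  unfold w; positivity
lemma hnu0 : 0 ≤ nu a b n := by
  have h1 := hn0 n hn
  have h2 := hwn0 a b n ha hb hba hn
  have hab : 0 < a + b := by positivity
  unfold nu; positivity
lemma hrho0 : 0 ≤ rho a b n := by
  have h1 := hn0 n hn
  unfold rho; positivity
lemma hnw0 : 0 ≤ n / w a b n :=
  le_of_lt (div_pos (hn0 n hn) (hw0 a b n ha hb hba hn))

/- identities that hold without the key relation -/

lemma E3 : w a b n/n = 1/n + rho a b n * ((-a) * (-a)) := by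
  have h1 := (hn0 n hn).ne'
  have hb' := hb.ne'
  have ha' := ha.ne'
  unfold w rho wn
  field_simp

lemma E4 : w a b n/n = (n/(w a b n)) * ((w a b n/n) * (w a b n/n)) := by
  have h1 := (hn0 n hn).ne'
  have h2 := (hw0 a b n ha hb hba hn).ne'
  field_simp

lemma E5 : w a b n/n + A3 a b n
    = (n/(w a b n)) * ((w a b n/n + A3 a b n) * (w a b n/n)) := by
  have h1 := (hn0 n hn).ne'
  have h2 := (hw0 a b n ha hb hba hn).ne'
  field_simp

lemma E6 : w a b n/n + B3 a b n
    = (n/(w a b n)) * ((w a b n/n + B3 a b n) * (w a b n/n)) := by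
  have h1 := (hn0 n hn).ne'
  have h2 := (hw0 a b n ha hb hba hn).ne'
  field_simp

lemma E7 : w a b n/n + y2 a b n + 2*(A3 a b n)
    = (n/(w a b n)) * ((w a b n/n + A3 a b n) * (w a b n/n + A3 a b n))
      + nu a b n * (a*a) := by
  have h1 := (hn0 n hn).ne'
  have h2 := (hwn0 a b n ha hb hba hn).ne'
  have hab : a + b ≠ 0 := by positivity
  have ha' := ha.ne'
  have hb' := hb.ne'
  unfold y2 nu A3 w wn S
  field_simp
  ring

lemma E8 : w a b n/n + z2 a b n + 2*(B3 a b n)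
    = (n/(w a b n)) * ((w a b n/n + B3 a b n) * (w a b n/n + B3 a b n))
      + nu a b n * (b*b) := by
  have h1 := (hn0 n hn).ne'
  have h2 := (hwn0 a b n ha hb hba hn).ne'
  have hab : a + b ≠ 0 := by positivity
  have ha' := ha.ne'
  have hb' := hb.ne'
  unfold z2 y2 nu B3 w wn S
  field_simp
  ring

lemma E9 : w a b n/n + A3 a b n + B3 a b n
    = (n/(w a b n)) * ((w a b n/n + A3 a b n) * (w a b n/n + B3 a b n))
      + nu a b n * (a*b) := by
  have h1 := (hn0 n hn).ne'
  have h2 := (hwn0 a b n ha hb hba hn).ne'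
  have hab : a + b ≠ 0 := by positivity
  have ha' := ha.ne'
  have hb' := hb.ne'
  unfold nu A3 B3 w wn S
  field_simp
  ring

/- identities that need the key relation -/

variable (key : a^2 + (n-1)*b^2 = n)
include key

lemma E2 : w a b n/n + A3 a b n + B3 a b n
    = 1/n + rho a b n * ((b*(n-1)) * (-a)) := by
  have h1 := (hn0 n hn).ne'
  have hab : a + b ≠ 0 := by positivity
  have ha' := ha.ne'
  have hb' := hb.ne'
  unfold rho A3 B3 w wn S
  field_simp
  linear_combination (1*b^2 + -1*b^2*n^1 + -2*a^1*b^1 + 1*a^1*b^1*n^1 + 1*a^2) * key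

lemma E1 : w a b n/n + y2 a b n + z2 a b n + 2*(A3 a b n) + 2*(B3 a b n)
    = 1/n + rho a b n * ((b*(n-1)) * (b*(n-1))) := by
  have h1 := (hn0 n hn).ne'
  have h2 := (hwn0 a b n ha hb hba hn).ne'
  have hab : a + b ≠ 0 := by positivity
  have ha' := ha.ne'
  have hb' := hb.ne'
  unfold rho z2 y2 A3 B3 w wn S
  field_simp
  linear_combination (-1*a^1*b^4*n^1 + 4*a^1*b^4*n^2 + -3*a^1*b^4*n^3 + 1*a^1*b^6 + -1*a^1*b^6*n^1 + -1*a^1*b^6*n^2 + 1*a^1*b^6*n^3 + 4*a^2*b^3*n^1 + -8*a^2*b^3*n^2 + 2*a^2*b^3*n^3 + -2*a^2*b^5 + 4*a^2*b^5*n^2 + -2*a^2*b^5*n^3 + -6*a^3*b^2*n^1 + 4*a^3*b^2*n^2 + 1*a^3*b^2*n^3 + -1*a^3*b^4 + 6*a^3*b^4*n^1 + -6*a^3*b^4*n^2 + 1*a^3*b^4*n^3 + 4*a^4*b^1*n^1 + 4*a^4*b^3 + -8*a^4*b^3*n^1 + 4*a^4*b^3*n^2 + -1*a^5*n^1 + -1*a^5*b^2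 + 3*a^5*b^2*n^1 + -1*a^5*b^2*n^2 + -2*a^6*b^1 + 1*a^7) * key

lemma E10 : n*(z1 a b n) + (z2 a b n + 2*(B3 a b n))*a^2 = (S a b n)^2/n^2 := by
  have h1 := (hn0 n hn).ne'
  have h2 := (hwn0 a b n ha hb hba hn).ne'
  have hab : a + b ≠ 0 := by positivity
  have ha' := ha.ne'
  have hb' := hb.ne'
  unfold z1 z2 y2 A3 w wn B3 S
  field_simp
  linear_combination (-1*b^4*n^3 + -1*b^6*n^1 + 1*b^6*n^2 + -2*a^1*b^3*n^3 + -1*a^1*b^5 + 2*a^1*b^5*n^1 + -1*a^1*b^5*n^2 + -1*a^2*b^2*n^3 + 3*a^2*b^4 + -2*a^2*b^4*n^1 + -1*a^2*b^4*n^2 + -2*a^3*b^3 + 1*a^3*b^3*n^2 + -2*a^4*b^2 + 3*a^4*b^2*n^1 + 3*a^5*b^1 + -2*a^5*b^1*n^1 + -1*a^6) * key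

end Scalar


/-! ### Matrix certificate -/

section Mat

variable (d : ℕ)

def Ym (j : Fin d) : Matrix (Fin d) (Fin d) ℂ :=
  fun i k => ((y2 a b d * ((if i = j then (1:ℝ) else 0) * (if k = j then (1:ℝ) else 0))
    + A3 a b d * ((if i = j then (1:ℝ) else 0) + (if k = j then (1:ℝ) else 0))
    + w a b d / d
    - (if i = k then (y2 a b d + 2*(A3 a b d) + w a b d)/d else 0) : ℝ) : ℂ)

def Zm (x : Fin d) : Matrix (Fin d) (Fin d) ℂ :=
  fun i k => (((if i = k then z1 a b d else 0)
    + z2 a b d * ((if i = x then (1:ℝ) else 0) * (if k = x then (1:ℝ) else 0))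
    + B3 a b d * ((if i = x then (1:ℝ) else 0) + (if k = x then (1:ℝ) else 0)) : ℝ) : ℂ)

def ouR (v : Fin d → ℝ) : Matrix (Fin d) (Fin d) ℂ :=
  fun i k => ((v i * v k : ℝ) : ℂ)

def psiR : Fin d → ℝ := fun _ => (Real.sqrt d)⁻¹

def qv (j : Fin d) : Fin d → ℝ := fun i => if i = j then b*((d:ℝ)-1) else -a

def mv (x j : Fin d) : Fin d → ℝ :=
  fun i => w a b d/(d:ℝ) + (if i = j then A3 a b d else 0) + (if i = x then B3 a b d else 0)

def pv (x j : Fin d) : Fin d → ℝ :=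
  fun i => (if i = j then a else 0) + (if i = x then b else 0)

lemma trace_mul_ouR (K : Matrix (Fin d) (Fin d) ℂ) (v : Fin d → ℝ) :
    (K * ouR d v).trace
      = star (fun i => ((v i : ℝ) : ℂ)) ⬝ᵥ K.mulVec (fun i => ((v i : ℝ) : ℂ)) := by
  simp only [Matrix.trace, Matrix.diag, Matrix.mul_apply, ouR, dotProduct, Matrix.mulVec,
    Pi.star_apply, RCLike.star_def, Complex.conj_ofReal, Finset.mul_sum]
  refine Finset.sum_congr rfl fun i _ => Finset.sum_congr rfl fun k _ => ?_
  push_cast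
  ring

lemma pair_re_nonneg {K : Matrix (Fin d) (Fin d) ℂ} (hK : K.PosSemidef) (v : Fin d → ℝ) :
    0 ≤ ((K * ouR d v).trace).re := by
  rw [trace_mul_ouR]
  have h := hK.dotProduct_mulVec_nonneg (fun i => ((v i : ℝ) : ℂ))
  rw [Complex.le_def] at h
  simpa using h.1

variable {a b : ℝ}
variable (ha : 0 < a) (hb : 0 < b) (hba : b < a) (hnd : 2 ≤ (d:ℝ))
  (key : a^2 + ((d:ℝ)-1)*b^2 = (d:ℝ))

include ha hb hba hnd key

lemma MI (j : Fin d) :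
    Ym a b d j + Zm a b d j
      = ouR d (psiR d) + rho a b d • ouR d (qv a b d j) := by
  have hE1 := congrArg (Complex.ofReal) (E1 a b d ha hb hba hnd key)
  have hE2 := congrArg (Complex.ofReal) (E2 a b d ha hb hba hnd key)
  have hE3 := congrArg (Complex.ofReal) (E3 a b d ha hb hba hnd)
  push_cast at hE1 hE2 hE3
  have hps : (Real.sqrt d)⁻¹ * (Real.sqrt d)⁻¹ = 1/(d:ℝ) := by
    rw [← mul_inv, Real.mul_self_sqrt (by positivity), one_div]
  ext i k
  simp only [Matrix.add_apply, Matrix.smul_apply, Ym, Zm, ouR, psiR, qv, hps,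
    Complex.real_smul]
  by_cases hij : i = j <;> by_cases hkj : k = j
  · have hik : i = k := hij.trans hkj.symm
    simp only [if_pos hij, if_pos hkj, if_pos hik]
    unfold z1
    push_cast
    linear_combination hE1
  · have hik : ¬ i = k := fun h => hkj ((h.symm.trans hij))
    simp only [if_pos hij, if_neg hkj, if_neg hik]
    push_cast
    linear_combination hE2
  · have hik : ¬ i = k := fun h => hij (h.trans hkj)
    simp only [if_neg hij, if_pos hkj, if_neg hik]
    push_cast
    linear_combination hE2
  · by_cases hik : i = k
    · simp only [if_neg hij, if_neg hkj, if_pos hik]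
      unfold z1
      push_cast
      linear_combination hE3
    · simp only [if_neg hij, if_neg hkj, if_neg hik]
      push_cast
      linear_combination hE3

lemma MII {x j : Fin d} (hxj : x ≠ j) :
    Ym a b d j + Zm a b d x
      = ((d:ℝ)/(w a b d)) • ouR d (mv a b d x j) + nu a b d • ouR d (pv a b d x j) := by
  have hE4 := congrArg (Complex.ofReal) (E4 a b d ha hb hba hnd)
  have hE5 := congrArg (Complex.ofReal) (E5 a b d ha hb hba hnd)
  have hE6 := congrArg (Complex.ofReal) (E6 a b d ha hb hba hnd)
  have hE7 := congrArg (Complex.ofReal) (E7 a b d ha hb hba hnd)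
  have hE8 := congrArg (Complex.ofReal) (E8 a b d ha hb hba hnd)
  have hE9 := congrArg (Complex.ofReal) (E9 a b d ha hb hba hnd)
  push_cast at hE4 hE5 hE6 hE7 hE8 hE9
  ext i k
  simp only [Matrix.add_apply, Matrix.smul_apply, Ym, Zm, ouR, mv, pv, Complex.real_smul]
  by_cases hij : i = j <;> by_cases hkj : k = j
  · -- i = j, k = j
    have hik : i = k := hij.trans hkj.symm
    have hix : ¬ i = x := fun h => hxj (h.symm.trans hij)
    have hkx : ¬ k = x := fun h => hxj (h.symm.trans hkj)
    simp only [if_pos hij, if_pos hkj, if_pos hik, if_neg hix, if_neg hkx]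
    unfold z1
    push_cast
    linear_combination hE7
  · -- i = j, k ≠ j
    have hix : ¬ i = x := fun h => hxj (h.symm.trans hij)
    have hik : ¬ i = k := fun h => hkj (h.symm.trans hij)
    by_cases hkx : k = x
    · simp only [if_pos hij, if_neg hkj, if_pos hkx, if_neg hix, if_neg hik]
      push_cast
      linear_combination hE9
    · simp only [if_pos hij, if_neg hkj, if_neg hkx, if_neg hix, if_neg hik]
      push_cast
      linear_combination hE5
  · -- i ≠ j, k = j
    have hkx : ¬ k = x := fun h => hxj (h.symm.trans hkj)
    have hik : ¬ i = k := fun h => hij (h.trans hkj)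
    by_cases hix : i = x
    · simp only [if_neg hij, if_pos hkj, if_pos hix, if_neg hkx, if_neg hik]
      push_cast
      linear_combination hE9
    · simp only [if_neg hij, if_pos hkj, if_neg hix, if_neg hkx, if_neg hik]
      push_cast
      linear_combination hE5
  · -- i ≠ j, k ≠ j
    by_cases hix : i = x <;> by_cases hkx : k = x
    · have hik : i = k := hix.trans hkx.symm
      simp only [if_neg hij, if_neg hkj, if_pos hix, if_pos hkx, if_pos hik]
      unfold z1
      push_cast
      linear_combination hE8
    · have hik : ¬ i = k := fun h => hkx (h.symm.trans hix)
      simp only [if_neg hij, if_neg hkj, if_pos hix, if_neg hkx, if_neg hik]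
      push_cast
      linear_combination hE6
    · have hik : ¬ i = k := fun h => hix (h.trans hkx)
      simp only [if_neg hij, if_neg hkj, if_neg hix, if_pos hkx, if_neg hik]
      push_cast
      linear_combination hE6
    · by_cases hik : i = k
      · simp only [if_neg hij, if_neg hkj, if_neg hix, if_neg hkx, if_pos hik]
        unfold z1
        push_cast
        linear_combination hE4
      · simp only [if_neg hij, if_neg hkj, if_neg hix, if_neg hkx, if_neg hik]
        push_cast
        linear_combination hE4


lemma trace_Ym (j : Fin d) : (Ym a b d j).trace = 0 := by
  have hd0 : ((d:ℝ)) ≠ 0 := by linarith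
  simp only [Matrix.trace, Matrix.diag, Ym, eq_self_iff_true, if_true]
  rw [← Complex.ofReal_sum, Complex.ofReal_eq_zero]
  have hsum : ∀ i : Fin d,
      (y2 a b d * ((if i = j then (1:ℝ) else 0) * (if i = j then (1:ℝ) else 0))
        + A3 a b d * ((if i = j then (1:ℝ) else 0) + (if i = j then (1:ℝ) else 0))
        + w a b d/(d:ℝ) - (y2 a b d + 2*(A3 a b d) + w a b d)/(d:ℝ))
      = (if i = j then y2 a b d + 2*(A3 a b d) else 0)
        + (w a b d/(d:ℝ) - (y2 a b d + 2*(A3 a b d) + w a b d)/(d:ℝ)) := by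
    intro i
    by_cases hij : i = j <;> simp [hij] <;> ring
  rw [Finset.sum_congr rfl fun i _ => hsum i, Finset.sum_add_distrib,
    Finset.sum_ite_eq' Finset.univ j, Finset.sum_const, Finset.card_univ, Fintype.card_fin]
  simp only [Finset.mem_univ, if_true, nsmul_eq_mul]
  field_simp
  ring

lemma Zm_xx (x : Fin d) :
    Zm a b d x x x = ((z1 a b d + z2 a b d + 2*(B3 a b d) : ℝ) : ℂ) := by
  simp only [Zm, if_pos rfl]
  push_cast
  ring

lemma trace_Zm (x : Fin d) :
    (Zm a b d x).trace = (((d:ℝ)*(z1 a b d) + z2 a b d + 2*(B3 a b d) : ℝ) : ℂ) := by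
  simp only [Matrix.trace, Matrix.diag, Zm, eq_self_iff_true, if_true]
  rw [← Complex.ofReal_sum, Complex.ofReal_inj]
  have hsum : ∀ i : Fin d,
      (z1 a b d + z2 a b d * ((if i = x then (1:ℝ) else 0) * (if i = x then (1:ℝ) else 0))
        + B3 a b d * ((if i = x then (1:ℝ) else 0) + (if i = x then (1:ℝ) else 0)))
      = (if i = x then z2 a b d + 2*(B3 a b d) else 0) + z1 a b d := by
    intro i
    by_cases hix : i = x <;> simp [hix] <;> ring
  rw [Finset.sum_congr rfl fun i _ => hsum i, Finset.sum_add_distrib,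
    Finset.sum_ite_eq' Finset.univ x, Finset.sum_const, Finset.card_univ, Fintype.card_fin]
  simp only [Finset.mem_univ, if_true, nsmul_eq_mul]
  ring

omit ha hb hba hnd key in
lemma trace_std_mul (x : Fin d) (M : Matrix (Fin d) (Fin d) ℂ) :
    (Matrix.single x x (1:ℂ) * M).trace = M x x := by
  simp [Matrix.trace, Matrix.diag, Matrix.mul_apply, Matrix.single, ite_and,
    Finset.sum_ite_eq]

lemma trace_MZ (ε : ℝ) (x : Fin d) :
    ((noisyM d ε x) * Zm a b d x).trace
      = (((1-ε)*(z1 a b d + z2 a b d + 2*(B3 a b d))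
          + (ε/(d:ℝ))*((d:ℝ)*(z1 a b d) + z2 a b d + 2*(B3 a b d)) : ℝ) : ℂ) := by
  rw [noisyM]
  rw [add_mul, Matrix.trace_add, smul_mul_assoc, smul_mul_assoc, one_mul,
    Matrix.trace_smul, Matrix.trace_smul, trace_std_mul, Zm_xx d ha hb hba hnd key,
    trace_Zm d ha hb hba hnd key]
  simp only [smul_eq_mul]
  push_cast
  ring

end Mat

end NPB

theorem noisy_projective_upper_bound
    {d : ℕ} (hd : 2 ≤ d) (ε : ℝ) (hε0 : 0 < ε) (hε1 : ε < 1)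
    (K : Fin d → Fin d → Matrix (Fin d) (Fin d) ℂ) (hK : IsDecomp (noisyM d ε) K) :
    objective K (fun _ => ((Real.sqrt d : ℂ))⁻¹)
      ≤ (1 / (d : ℝ) ^ 2) *
        (Real.sqrt ((d : ℝ) - ((d : ℝ) - 1) * ε) + ((d : ℝ) - 1) * Real.sqrt ε) ^ 2 := by
  classical
  obtain ⟨hPSD, hcol, hrow⟩ := hK
  have hd2 : (2:ℝ) ≤ (d:ℝ) := by exact_mod_cast hd
  have hd0 : (0:ℝ) < (d:ℝ) := by linarith
  set a := Real.sqrt ((d:ℝ) - ((d:ℝ)-1)*ε) with ha_def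
  set b := Real.sqrt ε with hb_def
  have harg : (0:ℝ) < (d:ℝ) - ((d:ℝ)-1)*ε := by nlinarith
  have ha : 0 < a := Real.sqrt_pos.mpr harg
  have hb : 0 < b := Real.sqrt_pos.mpr hε0
  have ha2 : a^2 = (d:ℝ) - ((d:ℝ)-1)*ε := Real.sq_sqrt (le_of_lt harg)
  have hb2 : b^2 = ε := Real.sq_sqrt (le_of_lt hε0)
  have key : a^2 + ((d:ℝ)-1)*b^2 = (d:ℝ) := by rw [ha2, hb2]; ring
  have hba : b < a := Real.sqrt_lt_sqrt (le_of_lt hε0) (by nlinarith)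
  have hψ : (fun _ : Fin d => ((Real.sqrt d : ℂ))⁻¹)
      = (fun i => ((NPB.psiR d i : ℝ) : ℂ)) := by
    funext i
    simp only [NPB.psiR]
    push_cast
    ring
  rw [objective, hψ]
  -- abbreviations
  have hrho0 := NPB.hrho0 a b d ha hb hba hd2
  have hnu0 := NPB.hnu0 a b d ha hb hba hd2
  have hnw0 := NPB.hnw0 a b d ha hb hba hd2
  -- step: pointwise inequality
  have hstep : ∀ j : Fin d,
      (star (fun i => ((NPB.psiR d i : ℝ):ℂ)) ⬝ᵥ
          (K j j).mulVec (fun i => ((NPB.psiR d i : ℝ):ℂ))).re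
        ≤ ∑ x, ((K x j * (NPB.Ym a b d j + NPB.Zm a b d x)).trace).re := by
    intro j
    rw [← NPB.trace_mul_ouR]
    have hterm : ∀ x : Fin d, 0 ≤ ((K x j * (NPB.Ym a b d j + NPB.Zm a b d x)).trace).re := by
      intro x
      rcases eq_or_ne x j with rfl | hxj
      · rw [NPB.MI d ha hb hba hd2 key x, mul_add, Matrix.trace_add, Complex.add_re,
          Matrix.mul_smul, Matrix.trace_smul, Complex.real_smul, Complex.re_ofReal_mul]
        have h1 := NPB.pair_re_nonneg d (hPSD x x) (NPB.psiR d)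
        have h2 := NPB.pair_re_nonneg d (hPSD x x) (NPB.qv a b d x)
        positivity
      · rw [NPB.MII d ha hb hba hd2 key hxj, mul_add, Matrix.trace_add, Complex.add_re,
          Matrix.mul_smul, Matrix.mul_smul, Matrix.trace_smul, Matrix.trace_smul,
          Complex.real_smul, Complex.real_smul, Complex.re_ofReal_mul, Complex.re_ofReal_mul]
        have h1 := NPB.pair_re_nonneg d (hPSD x j) (NPB.mv a b d x j)
        have h2 := NPB.pair_re_nonneg d (hPSD x j) (NPB.pv a b d x j)
        positivity
    have hjj : ((K j j * NPB.ouR d (NPB.psiR d)).trace).re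
        ≤ ((K j j * (NPB.Ym a b d j + NPB.Zm a b d j)).trace).re := by
      rw [NPB.MI d ha hb hba hd2 key j, mul_add, Matrix.trace_add, Complex.add_re,
        Matrix.mul_smul, Matrix.trace_smul, Complex.real_smul, Complex.re_ofReal_mul]
      have h2 := NPB.pair_re_nonneg d (hPSD j j) (NPB.qv a b d j)
      nlinarith
    exact le_trans hjj (Finset.single_le_sum (fun x _ => hterm x) (Finset.mem_univ j))
  refine le_trans (Finset.sum_le_sum (fun j _ => hstep j)) (le_of_eq ?_)
  -- compute the total
  have hzero : ∀ j : Fin d, ((∑ x, K x j) * NPB.Ym a b d j).trace = 0 := by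
    intro j
    have h := hcol j
    have hY := NPB.trace_Ym d ha hb hba hd2 key j
    have hmul : (d:ℂ) * ((∑ x, K x j) * NPB.Ym a b d j).trace = 0 := by
      calc (d:ℂ) * ((∑ x, K x j) * NPB.Ym a b d j).trace
          = ((((d:ℂ) • ∑ x, K x j)) * NPB.Ym a b d j).trace := by
            rw [smul_mul_assoc, Matrix.trace_smul, smul_eq_mul]
        _ = ((((∑ x, (K x j).trace) • (1 : Matrix (Fin d) (Fin d) ℂ))) * NPB.Ym a b d j).trace := by
            rw [h]
        _ = (∑ x, (K x j).trace) * (NPB.Ym a b d j).trace := by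
            rw [smul_mul_assoc, one_mul, Matrix.trace_smul, smul_eq_mul]
        _ = 0 := by rw [hY, mul_zero]
    have hdne : ((d:ℂ)) ≠ 0 := Nat.cast_ne_zero.mpr (by omega)
    exact (mul_eq_zero.mp hmul).resolve_left hdne
  have htot : ∑ j : Fin d, ∑ x : Fin d, ((K x j * (NPB.Ym a b d j + NPB.Zm a b d x)).trace)
      = ((NPB.S a b d^2/(d:ℝ)^2 : ℝ) : ℂ) := by
    have hsplit : ∀ j x : Fin d, (K x j * (NPB.Ym a b d j + NPB.Zm a b d x)).trace
        = (K x j * NPB.Ym a b d j).trace + (K x j * NPB.Zm a b d x).trace := by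
      intro j x
      rw [mul_add, Matrix.trace_add]
    simp_rw [hsplit, Finset.sum_add_distrib]
    have hY0 : ∑ j : Fin d, ∑ x : Fin d, (K x j * NPB.Ym a b d j).trace = 0 := by
      refine Finset.sum_eq_zero fun j _ => ?_
      rw [← hzero j, Finset.sum_mul, Matrix.trace_sum]
    have hZv : ∑ j : Fin d, ∑ x : Fin d, (K x j * NPB.Zm a b d x).trace
        = ((NPB.S a b d^2/(d:ℝ)^2 : ℝ) : ℂ) := by
      rw [Finset.sum_comm]
      have hrowx : ∀ x : Fin d, ∑ j : Fin d, (K x j * NPB.Zm a b d x).trace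
          = ((noisyM d ε x) * NPB.Zm a b d x).trace := by
        intro x
        rw [← hrow x, Finset.sum_mul, Matrix.trace_sum]
      simp_rw [hrowx, NPB.trace_MZ d ha hb hba hd2 key ε]
      rw [Finset.sum_const, Finset.card_univ, Fintype.card_fin, nsmul_eq_mul]
      rw [← Complex.ofReal_natCast, ← Complex.ofReal_mul, Complex.ofReal_inj]
      have hE10 := NPB.E10 a b d ha hb hba hd2 key
      have ha2' : a^2 = (d:ℝ) - ((d:ℝ)-1)*ε := ha2
      have hdinv : ((d:ℝ))*((d:ℝ))⁻¹ = 1 := mul_inv_cancel₀ (ne_of_gt hd0)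
      linear_combination hE10 - (NPB.z2 a b d + 2*(NPB.B3 a b d)) * ha2'
        + ε*((d:ℝ)*(NPB.z1 a b d) + NPB.z2 a b d + 2*(NPB.B3 a b d)) * hdinv
    rw [hY0, hZv, zero_add]
  calc ∑ j : Fin d, ∑ x : Fin d, ((K x j * (NPB.Ym a b d j + NPB.Zm a b d x)).trace).re
      = (∑ j : Fin d, ∑ x : Fin d, ((K x j * (NPB.Ym a b d j + NPB.Zm a b d x)).trace)).re := by
        rw [Complex.re_sum]
        exact Finset.sum_congr rfl fun j _ => (Complex.re_sum _ _).symm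
    _ = NPB.S a b d^2/(d:ℝ)^2 := by rw [htot, Complex.ofReal_re]
    _ = (1 / (d : ℝ) ^ 2) * (a + ((d : ℝ) - 1) * b) ^ 2 := by
        unfold NPB.S
        ring
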